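/- arXiv:1805.05500 — 2 statements merged into one kernel-verified Lean document; each statement's English description precedes it below -/
import Mathlib

section
/- Let (Ω, 𝓕, μ) be a probability space, let A and B be real-valued random variables on Ω that are independent, and suppose that (essSup A = +∞ or essSup B = +∞) and (essInf A = −∞ or essInf B = −∞). Then for every t ∈ ℝ it holds that 0 < μ{A + B ≤ t} < 1. -/
open MeasureTheory ProbabilityTheory

lemma aux_gt_pos {Ω : Type*} [MeasurableSpace Ω] (μ : Measure Ω)
    (f : Ω → ℝ) (h : essSup (fun ω => ((f ω : ℝ) : EReal)) μ = ⊤) (c : ℝ) :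
    0 < μ {ω | c < f ω} := by
  by_contra hc
  push_neg at hc
  have h0 : μ {ω | c < f ω} = 0 := le_antisymm hc zero_le
  have hae : (fun ω => ((f ω : ℝ) : EReal)) ≤ᵐ[μ] fun _ => (c : EReal) := by
    refine (ae_iff.mpr ?_)
    convert h0 using 2
    ext ω
    simp [EReal.coe_le_coe_iff, not_le]
  have := essSup_le_of_ae_le (μ := μ) (c : EReal) hae
  rw [h] at this
  exact absurd this (by simp)

lemma aux_lt_pos {Ω : Type*} [MeasurableSpace Ω] (μ : Measure Ω)
    (f : Ω → ℝ) (h : essInf (fun ω => ((f ω : ℝ) : EReal)) μ = ⊥) (c : ℝ) :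
    0 < μ {ω | f ω < c} := by
  by_contra hc
  push_neg at hc
  have h0 : μ {ω | f ω < c} = 0 := le_antisymm hc zero_le
  have hae : (fun _ => (c : EReal)) ≤ᵐ[μ] fun ω => ((f ω : ℝ) : EReal) := by
    refine (ae_iff.mpr ?_)
    convert h0 using 2
    ext ω
    simp [EReal.coe_le_coe_iff, not_le]
  have := le_essInf_of_ae_le (μ := μ) (c : EReal) hae
  rw [h] at this
  exact absurd this (by simp)

lemma aux_exists_le {Ω : Type*} [MeasurableSpace Ω] (μ : Measure Ω) [IsProbabilityMeasure μ]
    (f : Ω → ℝ) : ∃ c : ℝ, 0 < μ {ω | f ω ≤ c} := by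
  by_contra hc
  push_neg at hc
  have h0 : ∀ n : ℕ, μ {ω | f ω ≤ (n : ℝ)} = 0 := fun n =>
    le_antisymm (hc n) zero_le
  have : μ (⋃ n : ℕ, {ω | f ω ≤ (n : ℝ)}) = 0 := measure_iUnion_null h0
  have huniv : (⋃ n : ℕ, {ω | f ω ≤ (n : ℝ)}) = Set.univ := by
    ext ω
    simp only [Set.mem_iUnion, Set.mem_setOf_eq, Set.mem_univ, iff_true]
    obtain ⟨n, hn⟩ := exists_nat_ge (f ω)
    exact ⟨n, hn⟩
  rw [huniv, measure_univ] at this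
  simp at this

lemma aux_exists_gt {Ω : Type*} [MeasurableSpace Ω] (μ : Measure Ω) [IsProbabilityMeasure μ]
    (f : Ω → ℝ) : ∃ c : ℝ, 0 < μ {ω | c < f ω} := by
  by_contra hc
  push_neg at hc
  have h0 : ∀ n : ℕ, μ {ω | (-(n : ℝ)) < f ω} = 0 := fun n =>
    le_antisymm (hc _) zero_le
  have : μ (⋃ n : ℕ, {ω | (-(n : ℝ)) < f ω}) = 0 := measure_iUnion_null h0
  have huniv : (⋃ n : ℕ, {ω | (-(n : ℝ)) < f ω}) = Set.univ := by
    ext ω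
    simp only [Set.mem_iUnion, Set.mem_setOf_eq, Set.mem_univ, iff_true]
    obtain ⟨n, hn⟩ := exists_nat_ge (-f ω)
    exact ⟨n + 1, by push_cast; linarith⟩
  rw [huniv, measure_univ] at this
  simp at this

/-- core: essInf A = ⊥ gives positive lower tail of sum -/
lemma aux_low {Ω : Type*} [MeasurableSpace Ω] (μ : Measure Ω) [IsProbabilityMeasure μ]
    (A B : Ω → ℝ) (hA : Measurable A) (hB : Measurable B)
    (hindep : IndepFun A B μ)
    (h : essInf (fun ω => ((A ω : ℝ) : EReal)) μ = ⊥) (t : ℝ) :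
    0 < μ {ω | A ω + B ω ≤ t} := by
  obtain ⟨c, hc⟩ := aux_exists_le μ B
  have hA' := aux_lt_pos μ A h (t - c)
  have hsub : A ⁻¹' (Set.Iio (t - c)) ∩ B ⁻¹' (Set.Iic c) ⊆ {ω | A ω + B ω ≤ t} := by
    intro ω ⟨h1, h2⟩
    simp only [Set.mem_preimage, Set.mem_Iio, Set.mem_Iic] at h1 h2
    simp only [Set.mem_setOf_eq]; linarith
  refine lt_of_lt_of_le ?_ (measure_mono hsub)
  rw [hindep.measure_inter_preimage_eq_mul _ _ measurableSet_Iio measurableSet_Iic]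
  exact ENNReal.mul_pos (ne_of_gt hA') (ne_of_gt hc)

/-- core: essSup A = ⊤ gives positive upper tail of sum -/
lemma aux_high {Ω : Type*} [MeasurableSpace Ω] (μ : Measure Ω) [IsProbabilityMeasure μ]
    (A B : Ω → ℝ) (hA : Measurable A) (hB : Measurable B)
    (hindep : IndepFun A B μ)
    (h : essSup (fun ω => ((A ω : ℝ) : EReal)) μ = ⊤) (t : ℝ) :
    μ {ω | A ω + B ω ≤ t} < 1 := by
  obtain ⟨c, hc⟩ := aux_exists_gt μ B
  have hA' := aux_gt_pos μ A h (t - c)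
  have hsub : A ⁻¹' (Set.Ioi (t - c)) ∩ B ⁻¹' (Set.Ioi c) ⊆ {ω | t < A ω + B ω} := by
    intro ω ⟨h1, h2⟩
    simp only [Set.mem_preimage, Set.mem_Ioi] at h1 h2
    simp only [Set.mem_setOf_eq]; linarith
  have hpos : 0 < μ {ω | t < A ω + B ω} := by
    refine lt_of_lt_of_le ?_ (measure_mono hsub)
    rw [hindep.measure_inter_preimage_eq_mul _ _ measurableSet_Ioi measurableSet_Ioi]
    exact ENNReal.mul_pos (ne_of_gt hA') (ne_of_gt hc)
  have hcompl : {ω | A ω + B ω ≤ t} = {ω | t < A ω + B ω}ᶜ := by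
    ext ω; simp [not_lt]
  rw [hcompl]
  have hm : MeasurableSet {ω | t < A ω + B ω} :=
    measurableSet_lt measurable_const ((hA.add hB))
  rw [measure_compl hm (measure_ne_top μ _), measure_univ]
  exact ENNReal.sub_lt_self ENNReal.one_ne_top one_ne_zero (ne_of_gt hpos)

/-- Let `A` and `B` be independent real-valued random variables on a probability space such
that (`essSup A = +∞` or `essSup B = +∞`) and (`essInf A = -∞` or `essInf B = -∞`), where the
essential supremum/infimum are taken in the extended reals. Then for every real `t` one has
`0 < μ{A + B ≤ t} < 1`. -/
theorem cdf_sum_strictly_between_of_unbounded {Ω : Type*} [MeasurableSpace Ω]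
    (μ : Measure Ω) [IsProbabilityMeasure μ]
    (A B : Ω → ℝ) (hA : Measurable A) (hB : Measurable B)
    (hindep : IndepFun A B μ)
    (hsup : essSup (fun ω => ((A ω : ℝ) : EReal)) μ = ⊤ ∨
            essSup (fun ω => ((B ω : ℝ) : EReal)) μ = ⊤)
    (hinf : essInf (fun ω => ((A ω : ℝ) : EReal)) μ = ⊥ ∨
            essInf (fun ω => ((B ω : ℝ) : EReal)) μ = ⊥) :
    ∀ t : ℝ, 0 < μ {ω | A ω + B ω ≤ t} ∧ μ {ω | A ω + B ω ≤ t} < 1 := by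
  intro t
  have hcomm : {ω | A ω + B ω ≤ t} = {ω | B ω + A ω ≤ t} := by
    ext ω; simp [add_comm]
  constructor
  · rcases hinf with h | h
    · exact aux_low μ A B hA hB hindep h t
    · rw [hcomm]; exact aux_low μ B A hB hA hindep.symm h t
  · rcases hsup with h | h
    · exact aux_high μ A B hA hB hindep h t
    · rw [hcomm]; exact aux_high μ B A hB hA hindep.symm h t
end

section
/- Let N ≥ 1 and let ν₀ and ν₁ be probability measures on {0,1}^N, with cylinder probabilities P_w(x^n) and thresholds τ_{n+1}(x^n) = log(P_0(x^n)/P_1(x^n)) as above. Suppose there exist functions F_0, F_1 : ℝ → [0,1] such that for every 1 ≤ m ≤ N and every prefix x^{m−1} with P_0(x^{m−1}) > 0 and P_1(x^{m−1}) > 0 one has P_w(x^{m−1}⌢0)/P_w(x^{m−1}) = F_w(τ_m(x^{m−1})) for w ∈ {0,1}. Fix 1 ≤ n ≤ N and a prefix x_c of length n−1 with P_0(x_c) > 0 and P_1(x_c) > 0, and suppose F_0(τ_n(x_c)) = F_1(τ_n(x_c)) ∈ {0,1} (a local information cascade at agent n). Then there is a unique sequence a_n, a_{n+1}, …, a_N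 ∈ {0,1} such that for every n ≤ m ≤ N, writing y^m = x_c⌢(a_n, …, a_m): (i) P_w(y^m)/P_w(x_c) = 1 for w ∈ {0,1}, i.e. conditioned on the history x_c all subsequent decisions are almost surely equal to a_n, …, a_m under both measures; (ii) τ_{m+1}(y^m) = τ_n(x_c); and (iii) F_0(τ_{m+1}(y^m)) = F_1(τ_{m+1}(y^m)) ∈ {0,1}, i.e. every agent m > n also falls into a local information cascade. -/
open MeasureTheory

/-- Cylinder probability of a prefix `x` of length `n` under a measure `ν` on `{0,1}^N`. -/
noncomputable def cylProb {N : ℕ} (ν : Measure (Fin N → Fin 2)) {n : ℕ} (h : n ≤ N)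
    (x : Fin n → Fin 2) : ℝ :=
  (ν {y | ∀ i : Fin n, y (Fin.castLE h i) = x i}).toReal

/-- The social decision threshold `τ_{n+1}(x^n) = log(P₀(x^n)/P₁(x^n))` determined by the
cylinder probabilities of the prefix `x^n` under `ν₀` and `ν₁`. -/
noncomputable def socialThreshold {N : ℕ} (ν₀ ν₁ : Measure (Fin N → Fin 2)) {n : ℕ}
    (h : n ≤ N) (x : Fin n → Fin 2) : ℝ :=
  Real.log (cylProb ν₀ h x / cylProb ν₁ h x)

namespace CascadeAux

/-- The cylinder set determined by a prefix. -/
def cylSet {N n : ℕ} (h : n ≤ N) (x : Fin n → Fin 2) : Set (Fin N → Fin 2) :=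
  {y | ∀ i : Fin n, y (Fin.castLE h i) = x i}

lemma cylProb_def {N : ℕ} (ν : Measure (Fin N → Fin 2)) {n : ℕ} (h : n ≤ N)
    (x : Fin n → Fin 2) : cylProb ν h x = (ν (cylSet h x)).toReal := rfl

lemma measurableSet_cylSet {N n : ℕ} (h : n ≤ N) (x : Fin n → Fin 2) :
    MeasurableSet (cylSet h x) := by
  have : cylSet h x = ⋂ i : Fin n, (fun y : Fin N → Fin 2 => y (Fin.castLE h i)) ⁻¹' {x i} := by
    ext y; simp [cylSet]
  rw [this]
  exact MeasurableSet.iInter fun i => (measurable_pi_apply _) (measurableSet_singleton _)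

lemma fin2_cases (v : Fin 2) : v = 0 ∨ v = 1 := by revert v; decide

lemma cylSet_snoc {N k : ℕ} (hk : k + 1 ≤ N) (p : Fin k → Fin 2) (b : Fin 2) :
    cylSet (N := N) hk (Fin.snoc p b) =
      cylSet (Nat.le_of_succ_le hk) p ∩ {y | y ⟨k, hk⟩ = b} := by
  ext y
  simp only [cylSet, Set.mem_setOf_eq, Set.mem_inter_iff]
  constructor
  · intro h
    refine ⟨fun i => ?_, ?_⟩
    · have := h (Fin.castSucc i)
      rwa [Fin.snoc_castSucc,
        show Fin.castLE hk (Fin.castSucc i) = Fin.castLE (Nat.le_of_succ_le hk) i from rfl]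
        at this
    · have := h (Fin.last k)
      rwa [Fin.snoc_last, show Fin.castLE hk (Fin.last k) = ⟨k, hk⟩ from rfl] at this
  · rintro ⟨h1, h2⟩ i
    refine Fin.lastCases ?_ (fun s => ?_) i
    · rw [Fin.snoc_last]; exact h2
    · rw [Fin.snoc_castSucc]; exact h1 s

/-- The two one-step extensions of a prefix split its cylinder probability. -/
lemma cylProb_split {N k : ℕ} (ν : Measure (Fin N → Fin 2)) [IsProbabilityMeasure ν]
    (hk : k + 1 ≤ N) (p : Fin k → Fin 2) :
    cylProb ν hk (Fin.snoc p 0) + cylProb ν hk (Fin.snoc p 1) =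
      cylProb ν (Nat.le_of_succ_le hk) p := by
  have hu : cylSet (N := N) hk (Fin.snoc p 0) ∪ cylSet hk (Fin.snoc p 1) =
      cylSet (Nat.le_of_succ_le hk) p := by
    rw [cylSet_snoc, cylSet_snoc, ← Set.inter_union_distrib_left]
    have : {y : Fin N → Fin 2 | y ⟨k, hk⟩ = 0} ∪ {y | y ⟨k, hk⟩ = 1} = Set.univ := by
      ext y
      simp only [Set.mem_union, Set.mem_setOf_eq, Set.mem_univ, iff_true]
      exact fin2_cases _
    rw [this, Set.inter_univ]
  have hd : Disjoint (cylSet (N := N) hk (Fin.snoc p 0)) (cylSet hk (Fin.snoc p 1)) := by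
    rw [cylSet_snoc, cylSet_snoc, Set.disjoint_left]
    rintro y ⟨-, (h0 : y _ = 0)⟩ ⟨-, (h1 : y _ = 1)⟩
    exact absurd (h0.symm.trans h1) (by decide)
  rw [cylProb_def, cylProb_def, cylProb_def,
    ← ENNReal.toReal_add (measure_ne_top _ _) (measure_ne_top _ _),
    ← measure_union hd (measurableSet_cylSet _ _), hu]

lemma append_fin_zero {m : ℕ} (xc : Fin m → Fin 2) (g : Fin 0 → Fin 2) :
    Fin.append xc g = xc := by
  have hg : g = Fin.elim0 := funext fun t => t.elim0
  subst hg
  rw [Fin.append_elim0]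
  funext i
  exact congrArg xc (Fin.ext rfl)

lemma snoc_const (j : ℕ) (c : Fin 2) :
    Fin.snoc (fun _ : Fin j => c) c = fun _ : Fin (j + 1) => c := by
  funext i
  refine Fin.lastCases ?_ (fun s => ?_) i
  · rw [Fin.snoc_last]
  · rw [Fin.snoc_castSucc]

lemma append_const_succ {m j : ℕ} (xc : Fin m → Fin 2) (c : Fin 2) :
    Fin.append xc (fun _ : Fin (j + 1) => c) =
      Fin.snoc (Fin.append xc (fun _ : Fin j => c)) c := by
  have h := Fin.append_snoc xc (fun _ : Fin j => c) c
  rwa [snoc_const] at h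

lemma castLE_snoc {nm j : ℕ} (a' : Fin nm → Fin 2) (hj1 : j + 1 ≤ nm) :
    (fun t : Fin (j + 1) => a' (Fin.castLE hj1 t)) =
      Fin.snoc (fun t : Fin j => a' (Fin.castLE (Nat.le_of_succ_le hj1) t))
        (a' ⟨j, hj1⟩) := by
  funext t
  refine Fin.lastCases ?_ (fun s => ?_) t
  · rw [Fin.snoc_last]
    exact congrArg a' (Fin.ext rfl)
  · rw [Fin.snoc_castSucc]
    exact congrArg a' (Fin.ext rfl)

/-- One step of the cascade: if agent `k+1` is in a local cascade after prefix `p`,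
then the next decision is deterministic, the excluded branch is null, and the
threshold is unchanged. -/
lemma cascade_step {N : ℕ} (ν₀ ν₁ : Measure (Fin N → Fin 2))
    [IsProbabilityMeasure ν₀] [IsProbabilityMeasure ν₁] (F : Fin 2 → ℝ → ℝ)
    (hF : ∀ (k : ℕ) (hk : k + 1 ≤ N) (p : Fin k → Fin 2),
      0 < cylProb ν₀ (Nat.le_of_succ_le hk) p →
      0 < cylProb ν₁ (Nat.le_of_succ_le hk) p →
      cylProb ν₀ hk (Fin.snoc p 0) / cylProb ν₀ (Nat.le_of_succ_le hk) p =
          F 0 (socialThreshold ν₀ ν₁ (Nat.le_of_succ_le hk) p) ∧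
        cylProb ν₁ hk (Fin.snoc p 0) / cylProb ν₁ (Nat.le_of_succ_le hk) p =
          F 1 (socialThreshold ν₀ ν₁ (Nat.le_of_succ_le hk) p))
    {k : ℕ} (hk : k + 1 ≤ N) (p : Fin k → Fin 2)
    (h0 : 0 < cylProb ν₀ (Nat.le_of_succ_le hk) p)
    (h1 : 0 < cylProb ν₁ (Nat.le_of_succ_le hk) p)
    (hc : F 0 (socialThreshold ν₀ ν₁ (Nat.le_of_succ_le hk) p) =
      F 1 (socialThreshold ν₀ ν₁ (Nat.le_of_succ_le hk) p))
    (hbit : F 0 (socialThreshold ν₀ ν₁ (Nat.le_of_succ_le hk) p) = 0 ∨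
      F 0 (socialThreshold ν₀ ν₁ (Nat.le_of_succ_le hk) p) = 1) :
    ∃ b : Fin 2,
      ((F 0 (socialThreshold ν₀ ν₁ (Nat.le_of_succ_le hk) p) = 1 ∧ b = 0) ∨
        (F 0 (socialThreshold ν₀ ν₁ (Nat.le_of_succ_le hk) p) = 0 ∧ b = 1)) ∧
      cylProb ν₀ hk (Fin.snoc p b) = cylProb ν₀ (Nat.le_of_succ_le hk) p ∧
      cylProb ν₁ hk (Fin.snoc p b) = cylProb ν₁ (Nat.le_of_succ_le hk) p ∧
      (∀ b' : Fin 2, b' ≠ b → cylProb ν₀ hk (Fin.snoc p b') = 0) ∧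
      socialThreshold ν₀ ν₁ hk (Fin.snoc p b) =
        socialThreshold ν₀ ν₁ (Nat.le_of_succ_le hk) p := by
  obtain ⟨e0, e1⟩ := hF k hk p h0 h1
  have hsplit0 := cylProb_split ν₀ hk p
  have hsplit1 := cylProb_split ν₁ hk p
  rcases hbit with hz | ho
  · -- F 0 τ = 0 : the cascade decision is 1
    have hz1 : F 1 (socialThreshold ν₀ ν₁ (Nat.le_of_succ_le hk) p) = 0 := hc ▸ hz
    have z0 : cylProb ν₀ hk (Fin.snoc p 0) = 0 := by
      rcases div_eq_zero_iff.mp (e0.trans hz) with h | h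
      · exact h
      · exact absurd h (ne_of_gt h0)
    have z1 : cylProb ν₁ hk (Fin.snoc p 0) = 0 := by
      rcases div_eq_zero_iff.mp (e1.trans hz1) with h | h
      · exact h
      · exact absurd h (ne_of_gt h1)
    have s0 : cylProb ν₀ hk (Fin.snoc p 1) = cylProb ν₀ (Nat.le_of_succ_le hk) p := by
      linarith
    have s1 : cylProb ν₁ hk (Fin.snoc p 1) = cylProb ν₁ (Nat.le_of_succ_le hk) p := by
      linarith
    refine ⟨1, Or.inr ⟨hz, rfl⟩, s0, s1, fun b' hb' => ?_, ?_⟩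
    · rcases fin2_cases b' with rfl | rfl
      · exact z0
      · exact absurd rfl hb'
    · simp only [socialThreshold, s0, s1]
  · -- F 0 τ = 1 : the cascade decision is 0
    have ho1 : F 1 (socialThreshold ν₀ ν₁ (Nat.le_of_succ_le hk) p) = 1 := hc ▸ ho
    have s0 : cylProb ν₀ hk (Fin.snoc p 0) = cylProb ν₀ (Nat.le_of_succ_le hk) p := by
      have := e0.trans ho
      field_simp at this
      exact this
    have s1 : cylProb ν₁ hk (Fin.snoc p 0) = cylProb ν₁ (Nat.le_of_succ_le hk) p := by
      have := e1.trans ho1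
      field_simp at this
      exact this
    have z0 : cylProb ν₀ hk (Fin.snoc p 1) = 0 := by linarith
    refine ⟨0, Or.inl ⟨ho, rfl⟩, s0, s1, fun b' hb' => ?_, ?_⟩
    · rcases fin2_cases b' with rfl | rfl
      · exact absurd rfl hb'
      · exact z0
    · simp only [socialThreshold, s0, s1]

/-- The main argument, with the cascade decision `c` made explicit. -/
lemma cascade_master {N : ℕ}
    (ν₀ ν₁ : Measure (Fin N → Fin 2))
    [IsProbabilityMeasure ν₀] [IsProbabilityMeasure ν₁]
    (F : Fin 2 → ℝ → ℝ)
    (hF : ∀ (k : ℕ) (hk : k + 1 ≤ N) (p : Fin k → Fin 2),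
      0 < cylProb ν₀ (Nat.le_of_succ_le hk) p →
      0 < cylProb ν₁ (Nat.le_of_succ_le hk) p →
      cylProb ν₀ hk (Fin.snoc p 0) / cylProb ν₀ (Nat.le_of_succ_le hk) p =
          F 0 (socialThreshold ν₀ ν₁ (Nat.le_of_succ_le hk) p) ∧
        cylProb ν₁ hk (Fin.snoc p 0) / cylProb ν₁ (Nat.le_of_succ_le hk) p =
          F 1 (socialThreshold ν₀ ν₁ (Nat.le_of_succ_le hk) p))
    {m : ℕ} (hmN : m + 1 ≤ N) (xc : Fin m → Fin 2)
    (h0 : 0 < cylProb ν₀ (Nat.le_of_succ_le hmN) xc)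
    (h1 : 0 < cylProb ν₁ (Nat.le_of_succ_le hmN) xc)
    (hc : F 0 (socialThreshold ν₀ ν₁ (Nat.le_of_succ_le hmN) xc) =
      F 1 (socialThreshold ν₀ ν₁ (Nat.le_of_succ_le hmN) xc))
    (c : Fin 2)
    (hcb : (F 0 (socialThreshold ν₀ ν₁ (Nat.le_of_succ_le hmN) xc) = 1 ∧ c = 0) ∨
      (F 0 (socialThreshold ν₀ ν₁ (Nat.le_of_succ_le hmN) xc) = 0 ∧ c = 1)) :
    ∃! a : Fin (N - m) → Fin 2, ∀ (j : ℕ) (hj1 : 1 ≤ j) (hj : j ≤ N - m),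
      (cylProb ν₀ (show m + j ≤ N by have := hj; omega)
            (Fin.append xc (fun i : Fin j => a (Fin.castLE hj i))) /
          cylProb ν₀ (Nat.le_of_succ_le hmN) xc = 1 ∧
        cylProb ν₁ (show m + j ≤ N by have := hj; omega)
            (Fin.append xc (fun i : Fin j => a (Fin.castLE hj i))) /
          cylProb ν₁ (Nat.le_of_succ_le hmN) xc = 1) ∧
      socialThreshold ν₀ ν₁ (show m + j ≤ N by have := hj; omega)
          (Fin.append xc (fun i : Fin j => a (Fin.castLE hj i))) =
        socialThreshold ν₀ ν₁ (Nat.le_of_succ_le hmN) xc ∧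
      (F 0 (socialThreshold ν₀ ν₁ (show m + j ≤ N by have := hj; omega)
            (Fin.append xc (fun i : Fin j => a (Fin.castLE hj i)))) =
          F 1 (socialThreshold ν₀ ν₁ (show m + j ≤ N by have := hj; omega)
            (Fin.append xc (fun i : Fin j => a (Fin.castLE hj i)))) ∧
        (F 0 (socialThreshold ν₀ ν₁ (show m + j ≤ N by have := hj; omega)
            (Fin.append xc (fun i : Fin j => a (Fin.castLE hj i)))) = 0 ∨
          F 0 (socialThreshold ν₀ ν₁ (show m + j ≤ N by have := hj; omega)
            (Fin.append xc (fun i : Fin j => a (Fin.castLE hj i)))) = 1)) := by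
  have hbit : F 0 (socialThreshold ν₀ ν₁ (Nat.le_of_succ_le hmN) xc) = 0 ∨
      F 0 (socialThreshold ν₀ ν₁ (Nat.le_of_succ_le hmN) xc) = 1 :=
    hcb.elim (fun h => Or.inr h.1) (fun h => Or.inl h.1)
  -- the constant sequence `c` keeps probabilities and thresholds fixed
  have key : ∀ (j : ℕ) (hjN : m + j ≤ N),
      cylProb ν₀ hjN (Fin.append xc (fun _ : Fin j => c)) =
          cylProb ν₀ (Nat.le_of_succ_le hmN) xc ∧
        cylProb ν₁ hjN (Fin.append xc (fun _ : Fin j => c)) =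
          cylProb ν₁ (Nat.le_of_succ_le hmN) xc ∧
        socialThreshold ν₀ ν₁ hjN (Fin.append xc (fun _ : Fin j => c)) =
          socialThreshold ν₀ ν₁ (Nat.le_of_succ_le hmN) xc := by
    intro j
    induction j with
    | zero =>
      intro hjN
      have happ : Fin.append xc (fun _ : Fin 0 => c) = xc := append_fin_zero xc _
      exact ⟨congrArg (cylProb ν₀ hjN) happ, congrArg (cylProb ν₁ hjN) happ,
        congrArg (socialThreshold ν₀ ν₁ hjN) happ⟩
    | succ j ih =>
      intro hjN
      have hjN' : m + j ≤ N := by omega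
      obtain ⟨e0, e1, eτ⟩ := ih hjN'
      have pos0 : 0 < cylProb ν₀ hjN' (Fin.append xc (fun _ : Fin j => c)) :=
        lt_of_lt_of_eq h0 e0.symm
      have pos1 : 0 < cylProb ν₁ hjN' (Fin.append xc (fun _ : Fin j => c)) :=
        lt_of_lt_of_eq h1 e1.symm
      obtain ⟨b, hbd, s0, s1, szero, sτ⟩ :=
        cascade_step ν₀ ν₁ F hF hjN (Fin.append xc (fun _ : Fin j => c)) pos0 pos1
          (by rw [eτ]; exact hc) (by rw [eτ]; exact hbit)
      have hbc : b = c := by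
        rcases hbd with ⟨hb, rfl⟩ | ⟨hb, rfl⟩ <;> rcases hcb with ⟨hcF, rfl⟩ | ⟨hcF, rfl⟩
        · rfl
        · rw [eτ] at hb; rw [hb] at hcF; norm_num at hcF
        · rw [eτ] at hb; rw [hb] at hcF; norm_num at hcF
        · rfl
      rw [hbc] at s0 s1 sτ
      have happ : Fin.append xc (fun _ : Fin (j + 1) => c) =
          Fin.snoc (Fin.append xc (fun _ : Fin j => c)) c := append_const_succ xc c
      exact ⟨(congrArg (cylProb ν₀ hjN) happ).trans (s0.trans e0),
        (congrArg (cylProb ν₁ hjN) happ).trans (s1.trans e1),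
        (congrArg (socialThreshold ν₀ ν₁ hjN) happ).trans (sτ.trans eτ)⟩
  refine ⟨fun _ => c, ?_, ?_⟩
  · -- existence: the constant sequence works
    intro j hj1 hj
    have hjN : m + j ≤ N := by omega
    obtain ⟨e0, e1, eτ⟩ := key j hjN
    refine ⟨⟨?_, ?_⟩, eτ, ?_, ?_⟩
    · exact (div_eq_one_iff_eq (ne_of_gt h0)).mpr e0
    · exact (div_eq_one_iff_eq (ne_of_gt h1)).mpr e1
    · show F 0 (socialThreshold ν₀ ν₁ hjN (Fin.append xc (fun _ : Fin j => c))) =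
        F 1 (socialThreshold ν₀ ν₁ hjN (Fin.append xc (fun _ : Fin j => c)))
      rw [eτ]; exact hc
    · show F 0 (socialThreshold ν₀ ν₁ hjN (Fin.append xc (fun _ : Fin j => c))) = 0 ∨
        F 0 (socialThreshold ν₀ ν₁ hjN (Fin.append xc (fun _ : Fin j => c))) = 1
      rw [eτ]; exact hbit
  · -- uniqueness
    intro a' ha'
    have uniq_key : ∀ (j : ℕ) (hj : j ≤ N - m) (hjN : m + j ≤ N),
        ((fun t : Fin j => a' (Fin.castLE hj t)) = fun _ : Fin j => c) ∧
        cylProb ν₀ hjN (Fin.append xc (fun t : Fin j => a' (Fin.castLE hj t))) =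
          cylProb ν₀ (Nat.le_of_succ_le hmN) xc ∧
        cylProb ν₁ hjN (Fin.append xc (fun t : Fin j => a' (Fin.castLE hj t))) =
          cylProb ν₁ (Nat.le_of_succ_le hmN) xc ∧
        socialThreshold ν₀ ν₁ hjN (Fin.append xc (fun t : Fin j => a' (Fin.castLE hj t))) =
          socialThreshold ν₀ ν₁ (Nat.le_of_succ_le hmN) xc := by
      intro j
      induction j with
      | zero =>
        intro hj hjN
        have happ : Fin.append xc (fun t : Fin 0 => a' (Fin.castLE hj t)) = xc :=
          append_fin_zero xc _
        exact ⟨funext fun t => t.elim0, congrArg (cylProb ν₀ hjN) happ,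
          congrArg (cylProb ν₁ hjN) happ, congrArg (socialThreshold ν₀ ν₁ hjN) happ⟩
      | succ j ih =>
        intro hj1 hjN
        have hjle : j ≤ N - m := Nat.le_of_succ_le hj1
        have hjN' : m + j ≤ N := by omega
        obtain ⟨hfun, e0, e1, eτ⟩ := ih hjle hjN'
        have pos0 : 0 < cylProb ν₀ hjN' (Fin.append xc (fun t : Fin j => a' (Fin.castLE hjle t))) :=
          lt_of_lt_of_eq h0 e0.symm
        have pos1 : 0 < cylProb ν₁ hjN' (Fin.append xc (fun t : Fin j => a' (Fin.castLE hjle t))) :=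
          lt_of_lt_of_eq h1 e1.symm
        obtain ⟨b, hbd, s0, s1, szero, sτ⟩ :=
          cascade_step ν₀ ν₁ F hF hjN (Fin.append xc (fun t : Fin j => a' (Fin.castLE hjle t)))
            pos0 pos1 (by rw [eτ]; exact hc) (by rw [eτ]; exact hbit)
        have hbc : b = c := by
          rcases hbd with ⟨hb, rfl⟩ | ⟨hb, rfl⟩ <;> rcases hcb with ⟨hcF, rfl⟩ | ⟨hcF, rfl⟩
          · rfl
          · rw [eτ] at hb; rw [hb] at hcF; norm_num at hcF
          · rw [eτ] at hb; rw [hb] at hcF; norm_num at hcF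
          · rfl
        rw [hbc] at s0 s1 szero sτ
        have hsnoc : (fun t : Fin (j + 1) => a' (Fin.castLE hj1 t)) =
            Fin.snoc (fun t : Fin j => a' (Fin.castLE hjle t)) (a' ⟨j, hj1⟩) :=
          castLE_snoc a' hj1
        have happ : Fin.append xc (fun t : Fin (j + 1) => a' (Fin.castLE hj1 t)) =
            Fin.snoc (Fin.append xc (fun t : Fin j => a' (Fin.castLE hjle t))) (a' ⟨j, hj1⟩) := by
          rw [hsnoc]; exact Fin.append_snoc _ _ _
        obtain ⟨⟨r0, -⟩, -, -⟩ := ha' (j + 1) (Nat.le_add_left 1 j) hj1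
        have P0 : cylProb ν₀ hjN (Fin.append xc (fun t : Fin (j + 1) => a' (Fin.castLE hj1 t))) =
            cylProb ν₀ (Nat.le_of_succ_le hmN) xc :=
          (div_eq_one_iff_eq (ne_of_gt h0)).mp r0
        have habc : a' ⟨j, hj1⟩ = c := by
          by_contra hne
          have hz := szero (a' ⟨j, hj1⟩) hne
          have hzz : cylProb ν₀ hjN
              (Fin.append xc (fun t : Fin (j + 1) => a' (Fin.castLE hj1 t))) = 0 :=
            (congrArg (cylProb ν₀ hjN) happ).trans hz
          have : cylProb ν₀ (Nat.le_of_succ_le hmN) xc = 0 := P0.symm.trans hzz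
          linarith
        refine ⟨?_, ?_, ?_, ?_⟩
        · rw [hsnoc, habc, hfun]; exact snoc_const j c
        · rw [happ, habc]; exact s0.trans e0
        · rw [happ, habc]; exact s1.trans e1
        · rw [happ, habc]; exact sτ.trans eτ
    have hfin := (uniq_key (N - m) le_rfl (by omega)).1
    funext i
    exact congrFun hfin i

end CascadeAux

/-- Proposition 1 of the paper: each local information cascade triggers a global information
cascade. Suppose that, for every prefix of positive probability under both measures, the
conditional probability of the next decision being `0` is `F_w` evaluated at the social
threshold (`F_w` being the conditional CDF of the combined private signal, with values in
`[0,1]`), and suppose agent `n = m + 1` falls into a local information cascade after history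
`x_c` of length `m`, i.e. `F₀(τ(x_c)) = F₁(τ(x_c)) ∈ {0,1}`. Then there is a unique sequence
of subsequent decisions `a` such that, for every later stage: (i) conditioned on `x_c`, all
subsequent decisions are almost surely the corresponding entries of `a` under both measures;
(ii) the social threshold stays equal to `τ(x_c)`; and (iii) every later agent also falls
into a local information cascade. -/
theorem local_cascade_triggers_global_cascade {N : ℕ}
    (ν₀ ν₁ : Measure (Fin N → Fin 2))
    [IsProbabilityMeasure ν₀] [IsProbabilityMeasure ν₁]
    (F : Fin 2 → ℝ → ℝ) (hFrange : ∀ (w : Fin 2) (t : ℝ), F w t ∈ Set.Icc (0 : ℝ) 1)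
    (hF : ∀ (k : ℕ) (hk : k + 1 ≤ N) (p : Fin k → Fin 2),
      0 < cylProb ν₀ (Nat.le_of_succ_le hk) p →
      0 < cylProb ν₁ (Nat.le_of_succ_le hk) p →
      cylProb ν₀ hk (Fin.snoc p 0) / cylProb ν₀ (Nat.le_of_succ_le hk) p =
          F 0 (socialThreshold ν₀ ν₁ (Nat.le_of_succ_le hk) p) ∧
        cylProb ν₁ hk (Fin.snoc p 0) / cylProb ν₁ (Nat.le_of_succ_le hk) p =
          F 1 (socialThreshold ν₀ ν₁ (Nat.le_of_succ_le hk) p))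
    {m : ℕ} (hmN : m + 1 ≤ N) (xc : Fin m → Fin 2)
    (h0 : 0 < cylProb ν₀ (Nat.le_of_succ_le hmN) xc)
    (h1 : 0 < cylProb ν₁ (Nat.le_of_succ_le hmN) xc)
    (hcascade : F 0 (socialThreshold ν₀ ν₁ (Nat.le_of_succ_le hmN) xc) =
        F 1 (socialThreshold ν₀ ν₁ (Nat.le_of_succ_le hmN) xc) ∧
      (F 0 (socialThreshold ν₀ ν₁ (Nat.le_of_succ_le hmN) xc) = 0 ∨
        F 0 (socialThreshold ν₀ ν₁ (Nat.le_of_succ_le hmN) xc) = 1)) :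
    ∃! a : Fin (N - m) → Fin 2, ∀ (j : ℕ) (hj1 : 1 ≤ j) (hj : j ≤ N - m),
      (cylProb ν₀ (show m + j ≤ N by omega)
            (Fin.append xc (fun i : Fin j => a (Fin.castLE hj i))) /
          cylProb ν₀ (Nat.le_of_succ_le hmN) xc = 1 ∧
        cylProb ν₁ (show m + j ≤ N by omega)
            (Fin.append xc (fun i : Fin j => a (Fin.castLE hj i))) /
          cylProb ν₁ (Nat.le_of_succ_le hmN) xc = 1) ∧
      socialThreshold ν₀ ν₁ (show m + j ≤ N by omega)
          (Fin.append xc (fun i : Fin j => a (Fin.castLE hj i))) =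
        socialThreshold ν₀ ν₁ (Nat.le_of_succ_le hmN) xc ∧
      (F 0 (socialThreshold ν₀ ν₁ (show m + j ≤ N by omega)
            (Fin.append xc (fun i : Fin j => a (Fin.castLE hj i)))) =
          F 1 (socialThreshold ν₀ ν₁ (show m + j ≤ N by omega)
            (Fin.append xc (fun i : Fin j => a (Fin.castLE hj i)))) ∧
        (F 0 (socialThreshold ν₀ ν₁ (show m + j ≤ N by omega)
            (Fin.append xc (fun i : Fin j => a (Fin.castLE hj i)))) = 0 ∨
          F 0 (socialThreshold ν₀ ν₁ (show m + j ≤ N by omega)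
            (Fin.append xc (fun i : Fin j => a (Fin.castLE hj i)))) = 1)) := by
  obtain ⟨hc, hbit | hbit⟩ := hcascade
  · exact CascadeAux.cascade_master ν₀ ν₁ F hF hmN xc h0 h1 hc 1 (Or.inr ⟨hbit, rfl⟩)
  · exact CascadeAux.cascade_master ν₀ ν₁ F hF hmN xc h0 h1 hc 0 (Or.inl ⟨hbit, rfl⟩)
end
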